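/- Let G be a graph on [n] and [n] = P₁ ∪ ... ∪ P_k a partition such that each G[Pᵢ] is empty and each G[Pᵢ,Pⱼ] (i < j) is either empty or a complete bipartite graph. Then the adjacency matrix A(G) and its quotient matrix A(G)|P×P have exactly the same nonzero eigenvalues with the same multiplicities. -/

import Mathlib

def partSet {n k : ℕ} (P : Fin n → Fin k) (i : Fin k) : Finset (Fin n) :=
  Finset.univ.filter (fun v => P v = i)

/-- The quotient matrix `A|P×Q` with entries
`b p q = (1/√(|P p||Q q|)) ∑_{i ∈ P p, j ∈ Q q} A i j`. -/
noncomputable def quotMat {m n k l : ℕ} (A : Matrix (Fin m) (Fin n) ℝ)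
    (P : Fin m → Fin k) (Q : Fin n → Fin l) : Matrix (Fin k) (Fin l) ℝ :=
  fun p q => (1 / Real.sqrt (((partSet P p).card : ℝ) * ((partSet Q q).card : ℝ))) *
    ∑ i ∈ partSet P p, ∑ j ∈ partSet Q q, A i j

open Matrix Polynomial

lemma charpoly_zero_aux (m : Type*) [Fintype m] [DecidableEq m] :
    (0 : Matrix m m ℝ).charpoly = X ^ Fintype.card m := by
  simp [Matrix.charpoly, charmatrix, Matrix.scalar, Matrix.det_diagonal, Finset.prod_const,
    Finset.card_univ]

lemma charpoly_conj_aux {m : Type*} [Fintype m] [DecidableEq m]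
    (U V Z : Matrix m m ℝ) (hUV : U * V = 1) (hVU : V * U = 1) :
    (V * Z * U).charpoly = Z.charpoly := by
  have hmap : ∀ W : Matrix m m ℝ, (C : ℝ →+* ℝ[X]).mapMatrix W = W.map C := fun _ => rfl
  have hcomm : ∀ W : Matrix m m ℝ, Commute (Matrix.scalar m (X : ℝ[X])) (W.map C) :=
    fun W => Matrix.scalar_commute X (fun r' => Commute.all X r') (W.map C)
  have hVUone : (V.map C) * (U.map C) = (1 : Matrix m m ℝ[X]) := by
    rw [← Matrix.map_mul, hVU]; simp
  have key : charmatrix (V * Z * U) =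
      (V.map C) * charmatrix Z * (U.map C) := by
    unfold charmatrix
    simp only [RingHom.mapMatrix_apply]
    rw [Matrix.mul_sub, Matrix.sub_mul]
    congr 1
    · rw [← (hcomm V).eq, Matrix.mul_assoc, hVUone, Matrix.mul_one]
    · rw [← Matrix.map_mul, ← Matrix.map_mul]
  unfold Matrix.charpoly
  rw [key, Matrix.det_mul, Matrix.det_mul]
  have : (V.map C).det * (U.map C).det = 1 := by
    rw [← Matrix.det_mul, ← Matrix.map_mul, hVU]; simp
  calc (V.map C).det * (charmatrix Z).det * (U.map C).det
      = ((V.map C).det * (U.map C).det) * (charmatrix Z).det := by ring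
    _ = (charmatrix Z).det := by rw [this, one_mul]

/-- Sylvester's determinant identity for characteristic polynomials. -/
lemma sylvester_aux {n k : ℕ} (M : Matrix (Fin n) (Fin k) ℝ) (N : Matrix (Fin k) (Fin n) ℝ) :
    (M * N).charpoly * X ^ k = X ^ n * (N * M).charpoly := by
  set Z₁ : Matrix (Fin n ⊕ Fin k) (Fin n ⊕ Fin k) ℝ := fromBlocks (M * N) 0 N 0
  set Z₂ : Matrix (Fin n ⊕ Fin k) (Fin n ⊕ Fin k) ℝ := fromBlocks 0 0 N (N * M)
  set U : Matrix (Fin n ⊕ Fin k) (Fin n ⊕ Fin k) ℝ := fromBlocks 1 M 0 1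
  set V : Matrix (Fin n ⊕ Fin k) (Fin n ⊕ Fin k) ℝ := fromBlocks 1 (-M) 0 1
  have hUV : U * V = 1 := by
    simp [U, V, Matrix.fromBlocks_multiply, ← Matrix.fromBlocks_one]
  have hVU : V * U = 1 := by
    simp [U, V, Matrix.fromBlocks_multiply, ← Matrix.fromBlocks_one]
  have hZ : Z₁ * U = U * Z₂ := by
    simp [Z₁, Z₂, U, Matrix.fromBlocks_multiply, Matrix.mul_assoc]
  have hconj : Z₂ = V * Z₁ * U := by
    rw [Matrix.mul_assoc, hZ, ← Matrix.mul_assoc, hVU, Matrix.one_mul]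
  have h1 : Z₁.charpoly = (M * N).charpoly * X ^ k := by
    rw [show Z₁ = fromBlocks (M * N) 0 N 0 from rfl, Matrix.charpoly_fromBlocks_zero₁₂,
      charpoly_zero_aux]
    simp
  have h2 : Z₂.charpoly = X ^ n * (N * M).charpoly := by
    rw [show Z₂ = fromBlocks 0 0 N (N * M) from rfl, Matrix.charpoly_fromBlocks_zero₁₂,
      charpoly_zero_aux]
    simp
  have h3 : Z₂.charpoly = Z₁.charpoly := by
    rw [hconj]; exact charpoly_conj_aux U V Z₁ hUV hVU
  rw [← h1, ← h2, h3]

/-- if each `G[P i]` is empty and each `G[P i, P j]` (`i ≠ j`) is empty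
or complete bipartite, then `A(G)` and its quotient matrix have exactly the same
nonzero eigenvalues with the same multiplicities (stated via root multiplicities
of the characteristic polynomials). -/
theorem stmt7 {n k : ℕ} (G : SimpleGraph (Fin n)) [DecidableRel G.Adj]
    (P : Fin n → Fin k) (hsurj : Function.Surjective P)
    (hempty : ∀ u v : Fin n, P u = P v → ¬ G.Adj u v)
    (hcomp : ∀ i j : Fin k, i ≠ j →
      (∀ u v : Fin n, P u = i → P v = j → ¬ G.Adj u v) ∨
      (∀ u v : Fin n, P u = i → P v = j → G.Adj u v)) :
    ∀ x : ℝ, x ≠ 0 →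
      (G.adjMatrix ℝ).charpoly.rootMultiplicity x
        = (quotMat (G.adjMatrix ℝ) P P).charpoly.rootMultiplicity x := by
  intro x hx
  set A := G.adjMatrix ℝ with hAdef
  set B := quotMat A P P with hBdef
  -- part sizes
  set np : Fin k → ℝ := fun p => ((partSet P p).card : ℝ) with hnpdef
  have hnp : ∀ p, 0 < np p := by
    intro p
    obtain ⟨i, hi⟩ := hsurj p
    have : i ∈ partSet P p := by simp [partSet, hi]
    have hpos : 0 < (partSet P p).card := Finset.card_pos.mpr ⟨i, this⟩
    simp only [hnpdef]
    exact_mod_cast hpos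
  set s : Fin k → ℝ := fun p => 1 / Real.sqrt (np p) with hsdef
  have hsqrt_pos : ∀ p, 0 < Real.sqrt (np p) := fun p => Real.sqrt_pos.mpr (hnp p)
  set S : Matrix (Fin n) (Fin k) ℝ := fun i p => if P i = p then s p else 0 with hSdef
  -- A u v depends only on the parts
  have hconst : ∀ i j u v : Fin n, P u = P i → P v = P j → A u v = A i j := by
    intro i j u v hu hv
    by_cases hij : P i = P j
    · have h1 : ¬ G.Adj u v := hempty u v (by rw [hu, hv, hij])
      have h2 : ¬ G.Adj i j := hempty i j hij
      simp [hAdef, h1, h2]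
    · rcases hcomp (P i) (P j) hij with h | h
      · have h1 : ¬ G.Adj u v := h u v hu hv
        have h2 : ¬ G.Adj i j := h i j rfl rfl
        simp [hAdef, h1, h2]
      · have h1 : G.Adj u v := h u v hu hv
        have h2 : G.Adj i j := h i j rfl rfl
        simp [hAdef, h1, h2]
  -- Sᵀ S = 1
  have hSS : Sᵀ * S = 1 := by
    ext p q
    simp only [Matrix.mul_apply, Matrix.transpose_apply]
    simp only [hSdef]
    by_cases hpq : p = q
    · subst hpq
      have : ∀ i : Fin n, (if P i = p then s p else 0) * (if P i = p then s p else 0)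
          = if P i = p then s p * s p else 0 := by intro i; split <;> simp
      rw [Finset.sum_congr rfl (fun i _ => this i)]
      rw [← Finset.sum_filter]
      simp only [Finset.sum_const, smul_eq_mul]
      have hcard : (Finset.univ.filter (fun i => P i = p)) = partSet P p := rfl
      rw [hcard]
      have hss : s p * s p = 1 / np p := by
        rw [hsdef]
        simp only [one_div, ← mul_inv]
        rw [Real.mul_self_sqrt (le_of_lt (hnp p))]
      rw [hss, Matrix.one_apply_eq, nsmul_eq_mul]
      have hcc : (((partSet P p).card : ℝ)) ≠ 0 := (hnp p).ne'
      simp only [hnpdef]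
      field_simp
    · have : ∀ i : Fin n, (if P i = p then s p else 0) * (if P i = q then s q else 0) = 0 := by
        intro i
        by_cases h1 : P i = p
        · have h2 : P i ≠ q := fun h => hpq (h1 ▸ h ▸ rfl)
          rw [if_pos h1, if_neg h2, mul_zero]
        · simp [h1]
      rw [Finset.sum_congr rfl (fun i _ => this i), Finset.sum_const_zero,
        Matrix.one_apply_ne hpq]
  -- A = (S * B) * Sᵀ
  have hA : A = (S * B) * Sᵀ := by
    ext i j
    rw [Matrix.mul_apply]
    have houter : ∀ q : Fin k, (S * B) i q * Sᵀ q j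
        = if q = P j then (S * B) i (P j) * s (P j) else 0 := by
      intro q
      by_cases h : q = P j
      · subst h; rw [if_pos rfl, Matrix.transpose_apply,
          show S j (P j) = if P j = P j then s (P j) else 0 from rfl, if_pos rfl]
      · rw [Matrix.transpose_apply, show S j q = if P j = q then s q else 0 from rfl]
        rw [if_neg (fun hh : P j = q => h hh.symm), mul_zero, if_neg h]
    rw [Finset.sum_congr rfl (fun q _ => houter q), Finset.sum_ite_eq' Finset.univ (P j)]
    simp only [Finset.mem_univ, if_true]
    rw [Matrix.mul_apply]
    have hinner : ∀ p : Fin k, S i p * B p (P j)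
        = if p = P i then s (P i) * B (P i) (P j) else 0 := by
      intro p
      by_cases h : p = P i
      · subst h; simp [hSdef]
      · simp only [hSdef]
        rw [if_neg (fun hh : P i = p => h hh.symm), zero_mul, if_neg h]
    rw [Finset.sum_congr rfl (fun p _ => hinner p), Finset.sum_ite_eq' Finset.univ (P i)]
    simp only [Finset.mem_univ, if_true]
    -- now compute B (P i) (P j)
    have hsum : ∑ u ∈ partSet P (P i), ∑ v ∈ partSet P (P j), A u v
        = np (P i) * np (P j) * A i j := by
      have : ∀ u ∈ partSet P (P i), ∑ v ∈ partSet P (P j), A u v = np (P j) * A i j := by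
        intro u hu
        have hu' : P u = P i := by simpa [partSet] using hu
        have : ∀ v ∈ partSet P (P j), A u v = A i j := by
          intro v hv
          have hv' : P v = P j := by simpa [partSet] using hv
          exact hconst i j u v hu' hv'
        rw [Finset.sum_congr rfl this, Finset.sum_const, hnpdef]
        simp [mul_comm]
      rw [Finset.sum_congr rfl this, Finset.sum_const, hnpdef]
      simp; ring
    have hB' : B (P i) (P j) = (1 / Real.sqrt (np (P i) * np (P j)))
        * (np (P i) * np (P j) * A i j) := by
      rw [hBdef]
      unfold quotMat
      rw [hsum]
    rw [hB']
    rw [Real.sqrt_mul (le_of_lt (hnp (P i)))]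
    have key : ∀ a b c : ℝ, 0 < a → 0 < b →
        (1 / Real.sqrt a) * (1 / (Real.sqrt a * Real.sqrt b) * (a * b * c))
          * (1 / Real.sqrt b) = c := by
      intro a b c ha hb
      have h1 := Real.mul_self_sqrt ha.le
      have h2 := Real.mul_self_sqrt hb.le
      have h3 := (Real.sqrt_pos.mpr ha).ne'
      have h4 := (Real.sqrt_pos.mpr hb).ne'
      field_simp
      calc a * b * c = (Real.sqrt a * Real.sqrt a) * (Real.sqrt b * Real.sqrt b) * c := by
            rw [h1, h2]
        _ = c * (Real.sqrt a * (Real.sqrt a * Real.sqrt b) * Real.sqrt b) := by ring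
        _ = Real.sqrt a ^ 2 * Real.sqrt b ^ 2 * c := by ring
    simp only [hsdef]
    exact (key _ _ _ (hnp (P i)) (hnp (P j))).symm
  -- Sᵀ * (S * B) = B
  have hB : Sᵀ * (S * B) = B := by
    rw [← Matrix.mul_assoc, hSS, Matrix.one_mul]
  -- Sylvester
  have hsyl := sylvester_aux (S * B) Sᵀ
  rw [← hA, hB] at hsyl
  -- compare root multiplicities
  have hA0 : A.charpoly ≠ 0 := A.charpoly_monic.ne_zero
  have hB0 : B.charpoly ≠ 0 := B.charpoly_monic.ne_zero
  have hXk : (X : ℝ[X]) ^ k ≠ 0 := pow_ne_zero _ X_ne_zero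
  have hXn : (X : ℝ[X]) ^ n ≠ 0 := pow_ne_zero _ X_ne_zero
  have hmul1 := Polynomial.rootMultiplicity_mul (x := x) (mul_ne_zero hA0 hXk)
  have hmul2 := Polynomial.rootMultiplicity_mul (x := x) (mul_ne_zero hXn hB0)
  have hXk0 : ((X : ℝ[X]) ^ k).rootMultiplicity x = 0 := by
    apply Polynomial.rootMultiplicity_eq_zero
    simp [Polynomial.IsRoot, hx]
  have hXn0 : ((X : ℝ[X]) ^ n).rootMultiplicity x = 0 := by
    apply Polynomial.rootMultiplicity_eq_zero
    simp [Polynomial.IsRoot, hx]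
  have := hsyl ▸ hmul1
  rw [hmul2, hXk0, hXn0] at this
  omega
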